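/- Let F be a field and let x = a·(y₁ ⊗ y₂ ⊗ y₃) + b·(y₁ ⊗ z₂ ⊗ z₃) + (w₁ ⊗ z₂ ⊗ y₃) with a, b ∈ F nonzero, y₁, w₁ linearly independent, y₂, z₂ linearly independent, and y₃, z₃ linearly independent. Then x has tensor rank exactly 3. -/

import Mathlib

open TensorProduct

variable (F : Type*) [Field F]

/-- Identification of `F² ⊗ F²` with `2 × 2` matrices. -/
noncomputable def toMat :
    ((Fin 2 → F) ⊗[F] (Fin 2 → F)) →ₗ[F] Matrix (Fin 2) (Fin 2) F :=
  TensorProduct.lift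
    { toFun := fun x =>
        { toFun := fun y => Matrix.of fun i j => x i * y j
          map_add' := by intro y z; ext i j; simp only [LinearMap.coe_mk, AddHom.coe_mk, LinearMap.add_apply, LinearMap.smul_apply, Matrix.add_apply, Matrix.smul_apply, Matrix.of_apply, Pi.add_apply, Pi.smul_apply, smul_eq_mul, RingHom.id_apply]; ring
          map_smul' := by intro c y; ext i j; simp only [LinearMap.coe_mk, AddHom.coe_mk, LinearMap.add_apply, LinearMap.smul_apply, Matrix.add_apply, Matrix.smul_apply, Matrix.of_apply, Pi.add_apply, Pi.smul_apply, smul_eq_mul, RingHom.id_apply]; ring }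
      map_add' := by
        intro x x'; refine LinearMap.ext fun y => ?_; ext i j
        simp only [LinearMap.coe_mk, AddHom.coe_mk, LinearMap.add_apply, LinearMap.smul_apply, Matrix.add_apply, Matrix.smul_apply, Matrix.of_apply, Pi.add_apply, Pi.smul_apply, smul_eq_mul, RingHom.id_apply]; ring
      map_smul' := by
        intro c x; refine LinearMap.ext fun y => ?_; ext i j
        simp only [LinearMap.coe_mk, AddHom.coe_mk, LinearMap.add_apply, LinearMap.smul_apply, Matrix.add_apply, Matrix.smul_apply, Matrix.of_apply, Pi.add_apply, Pi.smul_apply, smul_eq_mul, RingHom.id_apply]; ring }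

/-- Contraction of `v ∈ F² ⊗ F² ⊗ F²` by a functional on the first factor. -/
noncomputable def con1 (w : (Fin 2 → F) →ₗ[F] F) :
    ((Fin 2 → F) ⊗[F] ((Fin 2 → F) ⊗[F] (Fin 2 → F))) →ₗ[F]
      ((Fin 2 → F) ⊗[F] (Fin 2 → F)) :=
  (TensorProduct.lid F _).toLinearMap ∘ₗ TensorProduct.map w LinearMap.id

/-- Contraction of `v ∈ F² ⊗ F² ⊗ F²` by a functional on the second factor. -/
noncomputable def con2 (w : (Fin 2 → F) →ₗ[F] F) :
    ((Fin 2 → F) ⊗[F] ((Fin 2 → F) ⊗[F] (Fin 2 → F))) →ₗ[F]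
      ((Fin 2 → F) ⊗[F] (Fin 2 → F)) :=
  TensorProduct.map LinearMap.id
    ((TensorProduct.lid F _).toLinearMap ∘ₗ TensorProduct.map w LinearMap.id)

/-- Contraction of `v ∈ F² ⊗ F² ⊗ F²` by a functional on the third factor. -/
noncomputable def con3 (w : (Fin 2 → F) →ₗ[F] F) :
    ((Fin 2 → F) ⊗[F] ((Fin 2 → F) ⊗[F] (Fin 2 → F))) →ₗ[F]
      ((Fin 2 → F) ⊗[F] (Fin 2 → F)) :=
  TensorProduct.map LinearMap.id
    ((TensorProduct.rid F _).toLinearMap ∘ₗ TensorProduct.map LinearMap.id w)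

/-- A tensor in `F² ⊗ F² ⊗ F²` is singular if some contraction by a nonzero
functional on one of the three factors is a singular `2 × 2` tensor. -/
def TensorSingular (v : (Fin 2 → F) ⊗[F] ((Fin 2 → F) ⊗[F] (Fin 2 → F))) : Prop :=
  ∃ w : (Fin 2 → F) →ₗ[F] F, w ≠ 0 ∧
    ((toMat F (con1 F w v)).det = 0 ∨ (toMat F (con2 F w v)).det = 0 ∨
      (toMat F (con3 F w v)).det = 0)

/-- A tensor is nonsingular if all contractions by nonzero functionals are
invertible `2 × 2` tensors. -/
def TensorNonsingular (v : (Fin 2 → F) ⊗[F] ((Fin 2 → F) ⊗[F] (Fin 2 → F))) : Prop :=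
  ∀ w : (Fin 2 → F) →ₗ[F] F, w ≠ 0 →
    IsUnit (toMat F (con1 F w v)) ∧ IsUnit (toMat F (con2 F w v)) ∧
      IsUnit (toMat F (con3 F w v))

/-- The tensor rank: least number of pure tensors needed. -/
noncomputable def tensorRank (v : (Fin 2 → F) ⊗[F] ((Fin 2 → F) ⊗[F] (Fin 2 → F))) : ℕ :=
  sInf {k | ∃ f g h : Fin k → (Fin 2 → F),
    v = ∑ i, f i ⊗ₜ[F] (g i ⊗ₜ[F] h i)}

section Aux
variable {F}

private noncomputable def myB {y w : Fin 2 → F} (h : LinearIndependent F ![y, w]) :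
    Module.Basis (Fin 2) F (Fin 2 → F) :=
  basisOfLinearIndependentOfCardEqFinrank h (by simp)

private lemma myB_coord {y w : Fin 2 → F} (h : LinearIndependent F ![y, w]) (i j : Fin 2) :
    (myB h).coord i (![y, w] j) = if i = j then 1 else 0 := by
  have hj : myB h j = ![y, w] j := by simp [myB]
  have e := congrArg ((myB h).coord i) hj
  simp only [Module.Basis.coord_apply, Module.Basis.repr_self] at e
  rw [Module.Basis.coord_apply, ← e]
  simp [Finsupp.single_apply, eq_comm]

private lemma indep_det {u v : Fin 2 → F} (h : LinearIndependent F ![u, v]) :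
    u 0 * v 1 - u 1 * v 0 ≠ 0 := by
  have h' : LinearIndependent F (fun i => (Matrix.of ![u, v]) i) := h
  have hu := Matrix.linearIndependent_rows_iff_isUnit.mp h'
  have hd := (Matrix.isUnit_iff_isUnit_det _).mp hu
  simpa [Matrix.det_fin_two] using hd.ne_zero

private lemma con1_tmul (w : (Fin 2 → F) →ₗ[F] F) (p q r : Fin 2 → F) :
    con1 F w (p ⊗ₜ[F] (q ⊗ₜ[F] r)) = w p • (q ⊗ₜ[F] r) := by
  simp [con1]

private lemma toMat_tmul (q r : Fin 2 → F) (i j : Fin 2) :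
    toMat F (q ⊗ₜ[F] r) i j = q i * r j := by
  simp [toMat]

private lemma entry_eq (a b : F) (w : (Fin 2 → F) →ₗ[F] F) (y₁ w₁ y₂ z₂ y₃ z₃ : Fin 2 → F)
    (ff gg hh : Fin 2 → Fin 2 → F)
    (hrep : a • (y₁ ⊗ₜ[F] (y₂ ⊗ₜ[F] y₃)) + b • (y₁ ⊗ₜ[F] (z₂ ⊗ₜ[F] z₃)) +
        w₁ ⊗ₜ[F] (z₂ ⊗ₜ[F] y₃) =
        ff 0 ⊗ₜ[F] (gg 0 ⊗ₜ[F] hh 0) + ff 1 ⊗ₜ[F] (gg 1 ⊗ₜ[F] hh 1))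
    (i j : Fin 2) :
    a * (w y₁ * (y₂ i * y₃ j)) + b * (w y₁ * (z₂ i * z₃ j)) + w w₁ * (z₂ i * y₃ j)
      = w (ff 0) * (gg 0 i * hh 0 j) + w (ff 1) * (gg 1 i * hh 1 j) := by
  have e := congrArg (fun t => toMat F (con1 F w t) i j) hrep
  simp only [map_add, map_smul, con1_tmul, toMat_tmul, Matrix.add_apply, Matrix.smul_apply,
    smul_eq_mul, LinearMap.map_smul_of_tower, smul_smul] at e
  convert e using 2; ring_nf

private lemma no_rank_two (a b : F) (ha : a ≠ 0) (hb : b ≠ 0)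
    (y₁ w₁ y₂ z₂ y₃ z₃ : Fin 2 → F)
    (h1 : LinearIndependent F ![y₁, w₁])
    (h2 : LinearIndependent F ![y₂, z₂])
    (h3 : LinearIndependent F ![y₃, z₃])
    (ff gg hh : Fin 2 → Fin 2 → F)
    (hrep : a • (y₁ ⊗ₜ[F] (y₂ ⊗ₜ[F] y₃)) + b • (y₁ ⊗ₜ[F] (z₂ ⊗ₜ[F] z₃)) +
        w₁ ⊗ₜ[F] (z₂ ⊗ₜ[F] y₃) =
        ff 0 ⊗ₜ[F] (gg 0 ⊗ₜ[F] hh 0) + ff 1 ⊗ₜ[F] (gg 1 ⊗ₜ[F] hh 1)) : False := by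
  set c0 := (myB h1).coord 0 with hc0
  set c1 := (myB h1).coord 1 with hc1
  have hy1 : c0 y₁ = 1 := by simpa [hc0] using myB_coord h1 0 0
  have hw1 : c0 w₁ = 0 := by simpa [hc0] using myB_coord h1 0 1
  have hy1' : c1 y₁ = 0 := by simpa [hc1] using myB_coord h1 1 0
  have hw1' : c1 w₁ = 1 := by simpa [hc1] using myB_coord h1 1 1
  set p0 := c0 (ff 0) with hp0d
  set p1 := c0 (ff 1) with hp1d
  set q0 := c1 (ff 0) with hq0d
  set q1 := c1 (ff 1) with hq1d
  have hA : ∀ i j : Fin 2, a * (y₂ i * y₃ j) + b * (z₂ i * z₃ j)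
      = p0 * (gg 0 i * hh 0 j) + p1 * (gg 1 i * hh 1 j) := by
    intro i j
    have e := entry_eq a b c0 y₁ w₁ y₂ z₂ y₃ z₃ ff gg hh hrep i j
    rw [hy1, hw1] at e
    linear_combination e
  have hB : ∀ i j : Fin 2, z₂ i * y₃ j
      = q0 * (gg 0 i * hh 0 j) + q1 * (gg 1 i * hh 1 j) := by
    intro i j
    have e := entry_eq a b c1 y₁ w₁ y₂ z₂ y₃ z₃ ff gg hh hrep i j
    rw [hy1', hw1'] at e
    linear_combination e
  set d₂ := y₂ 0 * z₂ 1 - y₂ 1 * z₂ 0 with hd₂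
  set d₃ := y₃ 0 * z₃ 1 - y₃ 1 * z₃ 0 with hd₃
  have habd : a * b * d₂ * d₃ ≠ 0 :=
    mul_ne_zero (mul_ne_zero (mul_ne_zero ha hb) (indep_det h2)) (indep_det h3)
  set m := (gg 0 0 * hh 0 0) * (gg 1 1 * hh 1 1) + (gg 0 1 * hh 0 1) * (gg 1 0 * hh 1 0)
      - (gg 0 0 * hh 0 1) * (gg 1 1 * hh 1 0) - (gg 0 1 * hh 0 0) * (gg 1 0 * hh 1 1) with hm
  have key : ∀ l : F, (p0 + l * q0) * (p1 + l * q1) * m = a * b * d₂ * d₃ := by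
    intro l
    have hC : ∀ i j : Fin 2,
        (a * (y₂ i * y₃ j) + b * (z₂ i * z₃ j)) + l * (z₂ i * y₃ j)
          = (p0 + l * q0) * (gg 0 i * hh 0 j) + (p1 + l * q1) * (gg 1 i * hh 1 j) :=
      fun i j => by linear_combination hA i j + l * hB i j
    calc (p0 + l * q0) * (p1 + l * q1) * m
        = ((p0 + l * q0) * (gg 0 0 * hh 0 0) + (p1 + l * q1) * (gg 1 0 * hh 1 0))
            * ((p0 + l * q0) * (gg 0 1 * hh 0 1) + (p1 + l * q1) * (gg 1 1 * hh 1 1))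
          - ((p0 + l * q0) * (gg 0 0 * hh 0 1) + (p1 + l * q1) * (gg 1 0 * hh 1 1))
            * ((p0 + l * q0) * (gg 0 1 * hh 0 0) + (p1 + l * q1) * (gg 1 1 * hh 1 0)) := by
          ring
      _ = ((a * (y₂ 0 * y₃ 0) + b * (z₂ 0 * z₃ 0)) + l * (z₂ 0 * y₃ 0))
            * ((a * (y₂ 1 * y₃ 1) + b * (z₂ 1 * z₃ 1)) + l * (z₂ 1 * y₃ 1))
          - ((a * (y₂ 0 * y₃ 1) + b * (z₂ 0 * z₃ 1)) + l * (z₂ 0 * y₃ 1))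
            * ((a * (y₂ 1 * y₃ 0) + b * (z₂ 1 * z₃ 0)) + l * (z₂ 1 * y₃ 0)) := by
          rw [hC 0 0, hC 1 1, hC 0 1, hC 1 0]
      _ = a * b * d₂ * d₃ := by rw [hd₂, hd₃]; ring
  have hkey0 : p0 * p1 * m = a * b * d₂ * d₃ := by linear_combination key 0
  have hm0 : m ≠ 0 := fun h => habd (by rw [← hkey0, h, mul_zero])
  have hBdet : q0 * q1 * m = 0 := by
    have := hB
    calc q0 * q1 * m
        = (q0 * (gg 0 0 * hh 0 0) + q1 * (gg 1 0 * hh 1 0))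
            * (q0 * (gg 0 1 * hh 0 1) + q1 * (gg 1 1 * hh 1 1))
          - (q0 * (gg 0 0 * hh 0 1) + q1 * (gg 1 0 * hh 1 1))
            * (q0 * (gg 0 1 * hh 0 0) + q1 * (gg 1 1 * hh 1 0)) := by ring
      _ = (z₂ 0 * y₃ 0) * (z₂ 1 * y₃ 1) - (z₂ 0 * y₃ 1) * (z₂ 1 * y₃ 0) := by
          rw [← hB 0 0, ← hB 1 1, ← hB 0 1, ← hB 1 0]
      _ = 0 := by ring
  -- z₂ ≠ 0 and y₃ ≠ 0 give a nonzero entry of B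
  have hz2 : z₂ ≠ 0 := h2.ne_zero 1
  have hy3 : y₃ ≠ 0 := h3.ne_zero 0
  obtain ⟨i, hi⟩ := Function.ne_iff.mp hz2
  obtain ⟨j, hj⟩ := Function.ne_iff.mp hy3
  have hBij : z₂ i * y₃ j ≠ 0 := mul_ne_zero hi hj
  rcases mul_eq_zero.mp ((mul_eq_zero.mp hBdet).resolve_right hm0) with hq0 | hq1
  · -- q0 = 0, so q1 ≠ 0 from hBij
    have hq1ne : q1 ≠ 0 := by
      intro h
      apply hBij
      have := hB i j
      rw [hq0, h] at this
      simpa using this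
    have := key (-p1 / q1)
    rw [show p1 + (-p1 / q1) * q1 = 0 by field_simp; ring] at this
    exact habd (by linear_combination -this)
  · have hq0ne : q0 ≠ 0 := by
      intro h
      apply hBij
      have := hB i j
      rw [hq1, h] at this
      simpa using this
    have := key (-p0 / q0)
    rw [show p0 + (-p0 / q0) * q0 = 0 by field_simp; ring] at this
    exact habd (by linear_combination -this)

end Aux

/-- The singular tensors of the fourth orbit have tensor rank exactly `3`. -/
theorem stmt10 (F : Type*) [Field F] (a b : F) (ha : a ≠ 0) (hb : b ≠ 0)
    (y₁ w₁ y₂ z₂ y₃ z₃ : Fin 2 → F)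
    (h1 : LinearIndependent F ![y₁, w₁])
    (h2 : LinearIndependent F ![y₂, z₂])
    (h3 : LinearIndependent F ![y₃, z₃]) :
    tensorRank F
      (a • (y₁ ⊗ₜ[F] (y₂ ⊗ₜ[F] y₃)) + b • (y₁ ⊗ₜ[F] (z₂ ⊗ₜ[F] z₃)) +
        w₁ ⊗ₜ[F] (z₂ ⊗ₜ[F] y₃)) = 3 := by
  have hmem : (3 : ℕ) ∈ {k | ∃ f g h : Fin k → (Fin 2 → F),
      a • (y₁ ⊗ₜ[F] (y₂ ⊗ₜ[F] y₃)) + b • (y₁ ⊗ₜ[F] (z₂ ⊗ₜ[F] z₃)) +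
        w₁ ⊗ₜ[F] (z₂ ⊗ₜ[F] y₃) = ∑ i, f i ⊗ₜ[F] (g i ⊗ₜ[F] h i)} := by
    refine ⟨![a • y₁, b • y₁, w₁], ![y₂, z₂, z₂], ![y₃, z₃, y₃], ?_⟩
    simp [Fin.sum_univ_three, smul_tmul']
  refine le_antisymm (Nat.sInf_le hmem) (le_csInf ⟨3, hmem⟩ ?_)
  rintro k ⟨f, g, h, hrep⟩
  by_contra hlt
  push_neg at hlt
  interval_cases k
  · refine no_rank_two a b ha hb y₁ w₁ y₂ z₂ y₃ z₃ h1 h2 h3 ![0, 0] ![0, 0] ![0, 0] ?_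
    simp only [Finset.univ_eq_empty, Finset.sum_empty] at hrep
    simp [hrep]
  · refine no_rank_two a b ha hb y₁ w₁ y₂ z₂ y₃ z₃ h1 h2 h3 ![f 0, 0] ![g 0, 0] ![h 0, 0] ?_
    simp only [Fin.sum_univ_one] at hrep
    simp [hrep]
  · exact no_rank_two a b ha hb y₁ w₁ y₂ z₂ y₃ z₃ h1 h2 h3 f g h
      (by simpa [Fin.sum_univ_two] using hrep)
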